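/- Let λ > 1 and P ∈ ℝ. (i) If ψ : ℝ → ℝ is a strictly positive, twice differentiable, 2π-periodic classical solution of the homogeneous Euler ODE with parameters (λ, P), then P > 0. (ii) If (ψ, (a, b)) is a local solution of the homogeneous Euler ODE with parameters (λ, P), then P ≤ 0 and moreover lim_{θ → a⁺} ψ′(θ)² = −2P and lim_{θ → b⁻} ψ′(θ)² = −2P. -/

import Mathlib

open Real Set

open Filter in

open Filter in
private lemma part_i (lam P : ℝ) (hlam : 1 < lam)
    (ψ ψ' ψ'' : ℝ → ℝ)
    (hψ : ∀ θ : ℝ, HasDerivAt ψ (ψ' θ) θ)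
    (hψ' : ∀ θ : ℝ, HasDerivAt ψ' (ψ'' θ) θ)
    (hp : ∀ θ : ℝ, ψ (θ + 2 * Real.pi) = ψ θ)
    (hpos : ∀ θ : ℝ, 0 < ψ θ)
    (hode : ∀ θ : ℝ, 2 * (lam - 1) * P =
      -(lam - 1) * (ψ' θ) ^ 2 + lam ^ 2 * (ψ θ) ^ 2 + lam * (ψ'' θ) * (ψ θ)) :
    0 < P := by
  have hper : Function.Periodic ψ (2 * Real.pi) := hp
  have hcontψ : Continuous ψ :=
    continuous_iff_continuousAt.mpr fun θ => (hψ θ).continuousAt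
  have h2pi : (0:ℝ) < 2 * Real.pi := by positivity
  obtain ⟨θ₀, hθ₀mem, hmin⟩ := isCompact_Icc.exists_isMinOn
    (nonempty_Icc.mpr h2pi.le) (hcontψ.continuousOn (s := Icc 0 (2*Real.pi)))
  have hglob : ∀ θ, ψ θ₀ ≤ ψ θ := by
    intro θ
    obtain ⟨y, hy, hxy⟩ := hper.exists_mem_Ico₀ h2pi θ
    rw [hxy]
    exact hmin ⟨hy.1, hy.2.le⟩
  have hmin' : IsLocalMin ψ θ₀ := Filter.Eventually.of_forall hglob
  have hd0 : ψ' θ₀ = 0 := hmin'.hasDerivAt_eq_zero (hψ θ₀)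
  have hsecond : 0 ≤ ψ'' θ₀ := by
    by_contra hneg
    push_neg at hneg
    have hslope := hasDerivAt_iff_tendsto_slope.mp (hψ' θ₀)
    have hev : ∀ᶠ θ in nhdsWithin θ₀ (Set.Ioi θ₀), slope ψ' θ₀ θ < 0 := by
      have h1 : ∀ᶠ θ in nhdsWithin θ₀ {θ₀}ᶜ, slope ψ' θ₀ θ < 0 :=
        hslope.eventually_lt_const hneg
      exact h1.filter_mono (nhdsWithin_mono θ₀ (fun x hx => ne_of_gt hx))
    have hev2 : ∀ᶠ θ in nhdsWithin θ₀ (Set.Ioi θ₀), ψ' θ < 0 := by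
      filter_upwards [hev, self_mem_nhdsWithin] with θ h1 h2
      rw [slope_def_field, hd0, sub_zero] at h1
      have hpos' : 0 < θ - θ₀ := sub_pos.mpr h2
      rcases div_neg_iff.mp h1 with ⟨_,h⟩|⟨h,_⟩
      · linarith
      · exact h
    obtain ⟨u, hu, hsub⟩ := mem_nhdsGT_iff_exists_Ioo_subset.mp hev2
    have hanti : StrictAntiOn ψ (Icc θ₀ u) := by
      apply strictAntiOn_of_deriv_neg (convex_Icc _ _) hcontψ.continuousOn
      intro x hx
      rw [interior_Icc] at hx
      rw [(hψ x).deriv]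
      exact hsub hx
    have hlt : ψ u < ψ θ₀ := hanti (left_mem_Icc.mpr (le_of_lt hu))
      (right_mem_Icc.mpr (le_of_lt hu)) hu
    exact absurd (hglob u) (not_le.mpr hlt)
  have h := hode θ₀
  rw [hd0] at h
  have hψ0 := hpos θ₀
  have hlam0 : (0:ℝ) < lam := by linarith
  nlinarith [mul_nonneg (mul_nonneg hlam0.le hsecond) hψ0.le,
    mul_pos (mul_pos hlam0 hlam0) (mul_pos hψ0 hψ0), sq_nonneg (ψ θ₀)]


open Filter in
private lemma aux_const_on_Ioo {a b : ℝ} (H : ℝ → ℝ)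
    (hH : ∀ θ ∈ Set.Ioo a b, HasDerivAt H 0 θ) :
    ∀ x ∈ Set.Ioo a b, ∀ y ∈ Set.Ioo a b, H x = H y := by
  have key : ∀ x ∈ Set.Ioo a b, ∀ y ∈ Set.Ioo a b, x < y → H x = H y := by
    intro x hx y hy hxy
    have hcont : ContinuousOn H (Icc x y) := fun z hz =>
      ((hH z ⟨lt_of_lt_of_le hx.1 hz.1, lt_of_le_of_lt hz.2 hy.2⟩).continuousAt).continuousWithinAt
    obtain ⟨c, hc, hc0⟩ := exists_hasDerivAt_eq_slope H (fun _ => 0) hxy hcont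
      (fun z hz => hH z ⟨hx.1.trans hz.1, hz.2.trans hy.2⟩)
    have hne : y - x ≠ 0 := sub_ne_zero.mpr hxy.ne'
    field_simp at hc0
    linarith
  intro x hx y hy
  rcases lt_trichotomy x y with h|h|h
  · exact key x hx y hy h
  · rw [h]
  · exact (key y hy x hx h).symm

open Filter in
private lemma part_ii (lam P : ℝ) (hlam : 1 < lam)
    (a b : ℝ) (hab : a < b) (ψ ψ' ψ'' : ℝ → ℝ)
    (hcont : ContinuousOn ψ (Set.Icc a b))
    (ha0 : ψ a = 0) (hb0 : ψ b = 0)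
    (hpos : ∀ θ ∈ Set.Ioo a b, 0 < ψ θ)
    (hd1 : ∀ θ ∈ Set.Ioo a b, HasDerivAt ψ (ψ' θ) θ)
    (hd2 : ∀ θ ∈ Set.Ioo a b, HasDerivAt ψ' (ψ'' θ) θ)
    (hode : ∀ θ ∈ Set.Ioo a b, 2 * (lam - 1) * P =
      -(lam - 1) * (ψ' θ) ^ 2 + lam ^ 2 * (ψ θ) ^ 2 + lam * (ψ'' θ) * (ψ θ)) :
    P ≤ 0 ∧
      Filter.Tendsto (fun θ => (ψ' θ) ^ 2) (nhdsWithin a (Set.Ioo a b)) (nhds (-2 * P)) ∧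
      Filter.Tendsto (fun θ => (ψ' θ) ^ 2) (nhdsWithin b (Set.Ioo a b)) (nhds (-2 * P)) := by
  have hlam0 : (0:ℝ) < lam := by linarith
  set q : ℝ := 2 * (lam - 1) / lam with hqdef
  have hqpos : 0 < q := div_pos (by linarith) hlam0
  have hq' : q * lam = 2 * (lam - 1) := by rw [hqdef]; field_simp
  set G : ℝ → ℝ := fun θ => (ψ' θ) ^ 2 + lam ^ 2 * (ψ θ) ^ 2 + 2 * P with hGdef
  set H : ℝ → ℝ := fun θ => (ψ θ) ^ (-q) * G θ with hHdef
  -- H has zero derivative on Ioo a b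
  have hHder : ∀ θ ∈ Set.Ioo a b, HasDerivAt H 0 θ := by
    intro θ hθ
    have hψθ := hpos θ hθ
    have h1 : HasDerivAt (fun t => (ψ t) ^ (-q)) (ψ' θ * (-q) * (ψ θ) ^ (-q - 1)) θ :=
      (hd1 θ hθ).rpow_const (Or.inl hψθ.ne')
    have h2 : HasDerivAt G
        (2 * ψ' θ ^ 1 * ψ'' θ + lam ^ 2 * (2 * ψ θ ^ 1 * ψ' θ)) θ := by
      have hA : HasDerivAt (fun t => (ψ' t) ^ 2) (2 * ψ' θ ^ 1 * ψ'' θ) θ := by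
        simpa using (hd2 θ hθ).fun_pow 2
      have hB : HasDerivAt (fun t => lam ^ 2 * (ψ t) ^ 2) (lam ^ 2 * (2 * ψ θ ^ 1 * ψ' θ)) θ := by
        simpa using ((hd1 θ hθ).pow 2).const_mul (lam ^ 2)
      simpa [hGdef] using (hA.add hB).add_const (2 * P)
    have hsplit : (ψ θ) ^ (-q) = (ψ θ) ^ (-q - 1) * ψ θ := by
      rw [show (-q) = (-q - 1) + 1 by ring, Real.rpow_add hψθ, Real.rpow_one]
      norm_num
    have hzero : ψ' θ * (-q) * G θ +
        ψ θ * (2 * ψ' θ ^ 1 * ψ'' θ + lam ^ 2 * (2 * ψ θ ^ 1 * ψ' θ)) = 0 := by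
      have h := hode θ hθ
      have key : lam * (ψ' θ * (-q) * G θ +
          ψ θ * (2 * ψ' θ ^ 1 * ψ'' θ + lam ^ 2 * (2 * ψ θ ^ 1 * ψ' θ))) = 0 := by
        simp only [hGdef]
        linear_combination (-2 * ψ' θ) * h + (-(ψ' θ) *
          ((ψ' θ) ^ 2 + lam ^ 2 * (ψ θ) ^ 2 + 2 * P)) * hq'
      exact (mul_eq_zero.mp key).resolve_left hlam0.ne'
    have hmul := h1.fun_mul h2
    refine hmul.congr_deriv ?_
    rw [hsplit]
    linear_combination (ψ θ ^ (-q - 1)) * hzero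
  -- H is constant on Ioo a b
  have hmid : (a + b) / 2 ∈ Set.Ioo a b := ⟨by linarith, by linarith⟩
  set C : ℝ := H ((a + b) / 2) with hCdef
  have hconst : ∀ θ ∈ Set.Ioo a b, H θ = C :=
    fun θ hθ => aux_const_on_Ioo H hHder θ hθ _ hmid
  -- formula for ψ'^2
  have hformula : ∀ θ ∈ Set.Ioo a b,
      (ψ' θ) ^ 2 = C * (ψ θ) ^ q - lam ^ 2 * (ψ θ) ^ 2 - 2 * P := by
    intro θ hθ
    have hψθ := hpos θ hθ
    have hC := hconst θ hθ
    have hrq : (0:ℝ) < (ψ θ) ^ q := Real.rpow_pos_of_pos hψθ q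
    have hinv : (ψ θ) ^ (-q) = ((ψ θ) ^ q)⁻¹ := Real.rpow_neg hψθ.le q
    simp only [hHdef, hGdef, hinv] at hC
    have hGval : (ψ' θ) ^ 2 + lam ^ 2 * (ψ θ) ^ 2 + 2 * P = C * (ψ θ) ^ q := by
      field_simp at hC
      linarith
    linarith
  -- generic endpoint limit
  have endpoint : ∀ x : ℝ, Filter.Tendsto ψ (nhdsWithin x (Set.Ioo a b)) (nhds 0) →
      Filter.Tendsto (fun θ => (ψ' θ) ^ 2) (nhdsWithin x (Set.Ioo a b)) (nhds (-2 * P)) := by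
    intro x hx
    have hrq : Filter.Tendsto (fun θ => (ψ θ) ^ q) (nhdsWithin x (Set.Ioo a b)) (nhds 0) := by
      have hc : ContinuousAt (fun y : ℝ => y ^ q) 0 :=
        Real.continuousAt_rpow_const 0 q (Or.inr hqpos.le)
      have := hc.tendsto.comp hx
      rwa [Real.zero_rpow hqpos.ne'] at this
    have hsq : Filter.Tendsto (fun θ => (ψ θ) ^ 2) (nhdsWithin x (Set.Ioo a b)) (nhds 0) := by
      have := hx.pow 2
      simpa using this
    have hmain : Filter.Tendsto (fun θ => C * (ψ θ) ^ q - lam ^ 2 * (ψ θ) ^ 2 - 2 * P)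
        (nhdsWithin x (Set.Ioo a b)) (nhds (-2 * P)) := by
      have := ((hrq.const_mul C).sub (hsq.const_mul (lam ^ 2))).sub_const (2 * P)
      convert this using 2; ring
    refine hmain.congr' ?_
    filter_upwards [self_mem_nhdsWithin] with θ hθ
    exact (hformula θ hθ).symm
  have hta : Filter.Tendsto ψ (nhdsWithin a (Set.Ioo a b)) (nhds 0) := by
    have h1 : Filter.Tendsto ψ (nhdsWithin a (Set.Ioo a b)) (nhds (ψ a)) :=
      (hcont a ⟨le_refl a, hab.le⟩).mono Set.Ioo_subset_Icc_self
    rwa [ha0] at h1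
  have htb : Filter.Tendsto ψ (nhdsWithin b (Set.Ioo a b)) (nhds 0) := by
    have h1 : Filter.Tendsto ψ (nhdsWithin b (Set.Ioo a b)) (nhds (ψ b)) :=
      (hcont b ⟨hab.le, le_refl b⟩).mono Set.Ioo_subset_Icc_self
    rwa [hb0] at h1
  have hA := endpoint a hta
  have hB := endpoint b htb
  refine ⟨?_, hA, hB⟩
  haveI : (nhdsWithin a (Set.Ioo a b)).NeBot := by
    rw [← mem_closure_iff_nhdsWithin_neBot, closure_Ioo hab.ne]
    exact ⟨le_refl a, hab.le⟩
  have h0 : (0:ℝ) ≤ -2 * P :=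
    ge_of_tendsto hA (Filter.Eventually.of_forall fun θ => sq_nonneg _)
  linarith

/-- For `λ > 1`: (i) a strictly positive `2π`-periodic classical solution of the
homogeneous Euler ODE forces `P > 0`; (ii) a local solution forces `P ≤ 0`, and the squared slope
`ψ'(θ)²` tends to `-2P` at both endpoints of the life-time. -/
theorem pressure_sign_lambda_gt_one
    (lam P : ℝ) (hlam : 1 < lam) :
    ((∀ ψ ψ' ψ'' : ℝ → ℝ,
      (∀ θ : ℝ, HasDerivAt ψ (ψ' θ) θ) →
      (∀ θ : ℝ, HasDerivAt ψ' (ψ'' θ) θ) →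
      (∀ θ : ℝ, ψ (θ + 2 * Real.pi) = ψ θ) →
      (∀ θ : ℝ, 0 < ψ θ) →
      (∀ θ : ℝ, 2 * (lam - 1) * P =
        -(lam - 1) * (ψ' θ) ^ 2 + lam ^ 2 * (ψ θ) ^ 2 + lam * (ψ'' θ) * (ψ θ)) →
      0 < P)) ∧
    ((∀ a b : ℝ, a < b → ∀ ψ ψ' ψ'' : ℝ → ℝ,
      ContinuousOn ψ (Set.Icc a b) →
      ψ a = 0 → ψ b = 0 →
      (∀ θ ∈ Set.Ioo a b, 0 < ψ θ) →
      (∀ θ ∈ Set.Ioo a b, HasDerivAt ψ (ψ' θ) θ) →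
      (∀ θ ∈ Set.Ioo a b, HasDerivAt ψ' (ψ'' θ) θ) →
      (∀ θ ∈ Set.Ioo a b, 2 * (lam - 1) * P =
        -(lam - 1) * (ψ' θ) ^ 2 + lam ^ 2 * (ψ θ) ^ 2 + lam * (ψ'' θ) * (ψ θ)) →
      P ≤ 0 ∧
        Filter.Tendsto (fun θ => (ψ' θ) ^ 2) (nhdsWithin a (Set.Ioo a b)) (nhds (-2 * P)) ∧
        Filter.Tendsto (fun θ => (ψ' θ) ^ 2) (nhdsWithin b (Set.Ioo a b)) (nhds (-2 * P)))) := by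
  constructor
  · exact fun ψ ψ' ψ'' h1 h2 h3 h4 h5 => part_i lam P hlam ψ ψ' ψ'' h1 h2 h3 h4 h5
  · exact fun a b hab ψ ψ' ψ'' hc h0a h0b hp hd1 hd2 ho =>
      part_ii lam P hlam a b hab ψ ψ' ψ'' hc h0a h0b hp hd1 hd2 ho
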